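/- Let E₁,…,E_m be Hermitian matrices on ℂ^d with eigenvalues in [0,1] (two-outcome POVM elements), and let ρ be a density matrix with Tr(E_i ρ) ≥ 1 - ε for all i. If the measurements {E_i, I - E_i} are applied in sequence to initial state ρ, the probability that at least one measurement rejects (i.e., the 'I - E_i' outcome occurs for some i) is at most m·√ε. -/

import Mathlib

open Matrix
open scoped ComplexOrder

/-- A density matrix on `ℂ^d`. -/
def IsDensityMatrix {d : ℕ} (ρ : Matrix (Fin d) (Fin d) ℂ) : Prop :=
  ρ.PosSemidef ∧ ρ.trace = 1

/-- A two-outcome measurement: Hermitian with eigenvalues in `[0,1]`,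
i.e. `0 ≤ E ≤ I` in the PSD order. -/
def IsMeasurementMatrix {d : ℕ} (E : Matrix (Fin d) (Fin d) ℂ) : Prop :=
  E.PosSemidef ∧ (1 - E).PosSemidef

/-! ### Auxiliary material for the quantum union bound -/

open scoped MatrixOrder in
noncomputable def Matrix.PosSemidef.sqrt {d : ℕ} {A : Matrix (Fin d) (Fin d) ℂ}
    (_hA : A.PosSemidef) : Matrix (Fin d) (Fin d) ℂ := CFC.sqrt A

open scoped MatrixOrder in
lemma Matrix.PosSemidef.posSemidef_sqrt {d : ℕ} {A : Matrix (Fin d) (Fin d) ℂ}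
    (hA : A.PosSemidef) : hA.sqrt.PosSemidef := (CFC.sqrt_nonneg A).posSemidef

open scoped MatrixOrder in
lemma Matrix.PosSemidef.sqrt_mul_self {d : ℕ} {A : Matrix (Fin d) (Fin d) ℂ}
    (hA : A.PosSemidef) : hA.sqrt * hA.sqrt = A := CFC.sqrt_mul_sqrt_self A hA.nonneg

/-- Flatten a matrix into a Euclidean space vector (so that the Frobenius inner
product becomes the Euclidean inner product). -/
noncomputable def vecM {d : ℕ} (A : Matrix (Fin d) (Fin d) ℂ) :
    EuclideanSpace ℂ (Fin d × Fin d) :=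
  WithLp.toLp 2 (fun p : Fin d × Fin d => A p.1 p.2)

lemma vecM_zero {d : ℕ} : vecM (0 : Matrix (Fin d) (Fin d) ℂ) = 0 := rfl

lemma vecM_add {d : ℕ} (A B : Matrix (Fin d) (Fin d) ℂ) :
    vecM (A + B) = vecM A + vecM B := rfl

lemma vecM_sub {d : ℕ} (A B : Matrix (Fin d) (Fin d) ℂ) :
    vecM (A - B) = vecM A - vecM B := rfl

lemma inner_vecM {d : ℕ} (A B : Matrix (Fin d) (Fin d) ℂ) :
    (inner ℂ (vecM A) (vecM B) : ℂ) = (Aᴴ * B).trace := by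
  simp only [vecM, PiLp.inner_apply, PiLp.toLp_apply, RCLike.inner_apply, Matrix.trace, Matrix.diag,
    Matrix.mul_apply, Matrix.conjTranspose_apply, Fintype.sum_prod_type]
  rw [Finset.sum_comm]
  simp [mul_comm]

lemma norm_vecM_sq {d : ℕ} (A : Matrix (Fin d) (Fin d) ℂ) :
    (‖vecM A‖ : ℝ)^2 = ((Aᴴ * A).trace).re := by
  have h := inner_vecM A A
  rw [inner_self_eq_norm_sq_to_K] at h
  have := congrArg Complex.re h.symm
  simpa [← Complex.ofReal_pow] using this.symm

lemma trace_re_nonneg' {d : ℕ} {A : Matrix (Fin d) (Fin d) ℂ} (hA : A.PosSemidef) :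
    0 ≤ A.trace.re := by
  have h1 : hA.sqrt * hA.sqrt = A := hA.sqrt_mul_self
  have h2 : hA.sqrtᴴ = hA.sqrt := hA.posSemidef_sqrt.1
  calc (0:ℝ) ≤ ‖vecM hA.sqrt‖^2 := sq_nonneg _
    _ = ((hA.sqrtᴴ * hA.sqrt).trace).re := norm_vecM_sq _
    _ = A.trace.re := by rw [h2, h1]

lemma trace_mul_re_nonneg' {d : ℕ} {A B : Matrix (Fin d) (Fin d) ℂ}
    (hA : A.PosSemidef) (hB : B.PosSemidef) : 0 ≤ ((A * B).trace).re := by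
  have h1 : hB.sqrt * hB.sqrt = B := hB.sqrt_mul_self
  have h2 : hB.sqrtᴴ = hB.sqrt := hB.posSemidef_sqrt.1
  have key : ((hB.sqrtᴴ * A * hB.sqrt)).trace = (A * B).trace := by
    rw [Matrix.trace_mul_cycle, h2]
    rw [show hB.sqrt * hB.sqrt * A = B * A by rw [h1]]
    exact Matrix.trace_mul_comm _ _
  rw [← key]
  exact trace_re_nonneg' (hA.conjTranspose_mul_mul_same _)

lemma trace_mul_re_mono' {d : ℕ} {P Q ρ : Matrix (Fin d) (Fin d) ℂ}
    (hρ : ρ.PosSemidef) (h : (Q - P).PosSemidef) :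
    ((P * ρ).trace).re ≤ ((Q * ρ).trace).re := by
  have := trace_mul_re_nonneg' h hρ
  rw [Matrix.sub_mul, Matrix.trace_sub, Complex.sub_re] at this
  linarith

lemma eigenvalue_le_one' {d : ℕ} {S : Matrix (Fin d) (Fin d) ℂ} (hS : S.PosSemidef)
    (hE : ((1 : Matrix (Fin d) (Fin d) ℂ) - S * S).PosSemidef) (i : Fin d) :
    hS.1.eigenvalues i ≤ 1 := by
  set v : Fin d → ℂ := ⇑(hS.1.eigenvectorBasis i) with hv
  set l : ℝ := hS.1.eigenvalues i with hl
  have hmv : S *ᵥ v = l • v := hS.1.mulVec_eigenvectorBasis i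
  have hvv : dotProduct (star v) v = 1 := by
    have h1 : ‖hS.1.eigenvectorBasis i‖ = 1 := hS.1.eigenvectorBasis.orthonormal.1 i
    have h2 : (inner ℂ (hS.1.eigenvectorBasis i) (hS.1.eigenvectorBasis i) : ℂ)
        = dotProduct (star v) v :=
          (EuclideanSpace.inner_eq_star_dotProduct _ _).trans (dotProduct_comm _ _)
    rw [inner_self_eq_norm_sq_to_K, h1] at h2
    simpa using h2.symm
  have hq := hE.dotProduct_mulVec_nonneg v
  have hq2 : dotProduct (star v) (((1 : Matrix (Fin d) (Fin d) ℂ) - S * S) *ᵥ v)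
      = ((1 - l^2 : ℝ) : ℂ) := by
    rw [Matrix.sub_mulVec, Matrix.one_mulVec, ← Matrix.mulVec_mulVec, hmv,
      Matrix.mulVec_smul, hmv]
    rw [dotProduct_sub, hvv]
    simp only [RCLike.real_smul_eq_coe_smul (K := ℂ), smul_smul, dotProduct_smul, hvv,
      smul_eq_mul]
    push_cast
    ring_nf
    simp [sq]
  rw [hq2] at hq
  have : (0:ℝ) ≤ 1 - l^2 := by exact_mod_cast hq
  have hl0 : 0 ≤ l := hS.eigenvalues_nonneg i
  nlinarith

lemma one_sub_psd' {d : ℕ} {S : Matrix (Fin d) (Fin d) ℂ} (hS : S.PosSemidef)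
    (hE : ((1 : Matrix (Fin d) (Fin d) ℂ) - S * S).PosSemidef) :
    ((1 : Matrix (Fin d) (Fin d) ℂ) - S).PosSemidef := by
  set U : Matrix (Fin d) (Fin d) ℂ := (hS.1.eigenvectorUnitary : Matrix (Fin d) (Fin d) ℂ)
  have hUU : U * star U = 1 := (Matrix.mem_unitaryGroup_iff).mp hS.1.eigenvectorUnitary.2
  have hspec : S = U * Matrix.diagonal (RCLike.ofReal ∘ hS.1.eigenvalues) * star U :=
    hS.1.spectral_theorem
  have key : (1 : Matrix (Fin d) (Fin d) ℂ) - S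
      = U * Matrix.diagonal (fun i => 1 - (hS.1.eigenvalues i : ℂ)) * star U := by
    have : Matrix.diagonal (fun i => 1 - (hS.1.eigenvalues i : ℂ))
        = 1 - Matrix.diagonal (RCLike.ofReal ∘ hS.1.eigenvalues) := by
      rw [← Matrix.diagonal_one, Matrix.diagonal_sub]
      rfl
    rw [this, Matrix.mul_sub, Matrix.sub_mul, Matrix.mul_one, hUU, ← hspec]
  rw [key, Matrix.star_eq_conjTranspose U]
  have hdiag : (Matrix.diagonal (fun i => 1 - (hS.1.eigenvalues i : ℂ))).PosSemidef := by
    rw [Matrix.posSemidef_diagonal_iff]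
    intro i
    have h1 : hS.1.eigenvalues i ≤ 1 := eigenvalue_le_one' hS hE i
    have : ((1 - hS.1.eigenvalues i : ℝ) : ℂ) = 1 - (hS.1.eigenvalues i : ℂ) := by
      push_cast; ring
    rw [← this]
    exact_mod_cast sub_nonneg.mpr h1
  exact hdiag.mul_mul_conjTranspose_same U

lemma sub_sq_psd' {d : ℕ} {S : Matrix (Fin d) (Fin d) ℂ} (hS : S.PosSemidef)
    (hE : ((1 : Matrix (Fin d) (Fin d) ℂ) - S * S).PosSemidef) :
    (S - S * S).PosSemidef := by
  have h1 := one_sub_psd' hS hE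
  obtain ⟨R, hRh, hRS⟩ : ∃ R : Matrix (Fin d) (Fin d) ℂ, Rᴴ = R ∧ R * R = S :=
    ⟨hS.sqrt, hS.posSemidef_sqrt.1, hS.sqrt_mul_self⟩
  have h2 := h1.mul_mul_conjTranspose_same R
  have key : R * ((1 : Matrix (Fin d) (Fin d) ℂ) - S) * Rᴴ = S - S * S := by
    rw [hRh, Matrix.mul_sub, Matrix.mul_one, Matrix.sub_mul, hRS]
    congr 1
    rw [← hRS]
    simp only [Matrix.mul_assoc]
  rwa [key] at h2

lemma trace_quad_vecM {d : ℕ} (A Y : Matrix (Fin d) (Fin d) ℂ) :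
    (‖vecM (A * Y)‖ : ℝ)^2 = (((Aᴴ * A) * (Y * Yᴴ)).trace).re := by
  rw [norm_vecM_sq]
  congr 1
  have e1 : (A * Y)ᴴ * (A * Y) = Yᴴ * ((Aᴴ * A) * Y) := by
    simp only [Matrix.conjTranspose_mul, Matrix.mul_assoc]
  rw [e1, Matrix.trace_mul_comm, ← Matrix.mul_assoc, Matrix.trace_mul_comm]

lemma final_ineq' (M s t : ℝ) (hM : 2 ≤ M) (hs : 0 ≤ s) (hms : M*s ≤ 1) (ht0 : 0 ≤ t)
    (ht1 : t ≤ 1) (hB : 1 - t ≤ s^2*(M*(M+1))/2) : 1 - t^2 ≤ M*s := by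
  have hM0 : (0:ℝ) ≤ M := by linarith
  have hx0 : 0 ≤ M*s := mul_nonneg hM0 hs
  have hBC : s^2*(M*(M+1))/2 ≤ (3/4)*(M*s)^2 := by
    nlinarith [mul_nonneg (mul_nonneg (sq_nonneg s) hM0) (by linarith : (0:ℝ) ≤ M - 2)]
  have hC1 : (3/4)*(M*s)^2 ≤ 3/4 := by nlinarith
  have hB1 : s^2*(M*(M+1))/2 ≤ 1 := by linarith
  have hB0 : 0 ≤ s^2*(M*(M+1))/2 := by positivity
  have h1 : 1 - t^2 ≤ 2*(s^2*(M*(M+1))/2) - (s^2*(M*(M+1))/2)^2 := by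
    nlinarith [mul_nonneg (by linarith : (0:ℝ) ≤ s^2*(M*(M+1))/2 - (1-t))
      (by linarith : (0:ℝ) ≤ 1 + t - s^2*(M*(M+1))/2)]
  have h2 : 2*(s^2*(M*(M+1))/2) - (s^2*(M*(M+1))/2)^2
      ≤ 2*((3/4)*(M*s)^2) - ((3/4)*(M*s)^2)^2 := by
    nlinarith [mul_nonneg (by linarith : (0:ℝ) ≤ (3/4)*(M*s)^2 - s^2*(M*(M+1))/2)
      (by nlinarith : (0:ℝ) ≤ 2 - (3/4)*(M*s)^2 - s^2*(M*(M+1))/2)]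
  have hcubic : 0 ≤ 9*(M*s)^3 - 24*(M*s) + 16 := by
    nlinarith [mul_nonneg hx0 (sq_nonneg (3*(M*s)-2)),
      mul_nonneg (sub_nonneg.mpr hms) (sq_nonneg (3*(M*s)+2)), sq_nonneg (3*(M*s)-2)]
  have h3 : 2*((3/4)*(M*s)^2) - ((3/4)*(M*s)^2)^2 ≤ M*s := by
    nlinarith [mul_nonneg hx0 hcubic]
  linarith

/-- The (unnormalized) running post-measurement "amplitude" matrix. -/
noncomputable def seqX {d m : ℕ} (S : Fin m → Matrix (Fin d) (Fin d) ℂ)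
    (T : Matrix (Fin d) (Fin d) ℂ) : ℕ → Matrix (Fin d) (Fin d) ℂ
  | 0 => T
  | (u+1) => if h : u < m then S ⟨u, h⟩ * seqX S T u else seqX S T u

theorem quantum_union_bound {d m : ℕ} (ε : ℝ) (hε : 0 ≤ ε)
    (ρ : Matrix (Fin d) (Fin d) ℂ) (hρ : IsDensityMatrix ρ)
    (E : Fin m → Matrix (Fin d) (Fin d) ℂ)
    (hE : ∀ i, IsMeasurementMatrix (E i))
    (hacc : ∀ i, 1 - ε ≤ ((E i * ρ).trace).re)
    (S : Fin m → Matrix (Fin d) (Fin d) ℂ)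
    (hS : ∀ i, (S i).PosSemidef ∧ S i * S i = E i)
    (σ : ℕ → Matrix (Fin d) (Fin d) ℂ)
    (hσ0 : σ 0 = ρ)
    (hσ : ∀ u : Fin m, σ (u.1 + 1) = S u * σ u.1 * S u) :
    1 - ((σ m).trace).re ≤ m * Real.sqrt ε := by
  classical
  obtain ⟨hρp, hρ1⟩ := hρ
  set s : ℝ := Real.sqrt ε with hs
  have hs0 : 0 ≤ s := Real.sqrt_nonneg ε
  have hs2 : s^2 = ε := Real.sq_sqrt hε
  -- the square root of ρ
  set T : Matrix (Fin d) (Fin d) ℂ := hρp.sqrt with hTdef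
  have hTh : Tᴴ = T := hρp.posSemidef_sqrt.1
  have hTT : T * T = ρ := hρp.sqrt_mul_self
  set X : ℕ → Matrix (Fin d) (Fin d) ℂ := seqX S T with hX
  have hX0 : X 0 = T := rfl
  have hXs : ∀ u (h : u < m), X (u+1) = S ⟨u, h⟩ * X u := by
    intro u h; simp [hX, seqX, h]
  have hXn : ∀ u, ¬(u < m) → X (u+1) = X u := by
    intro u h; simp [hX, seqX, h]
  -- basic measurement facts
  have hSps : ∀ i, (S i).PosSemidef := fun i => (hS i).1
  have hSherm : ∀ i, (S i)ᴴ = S i := fun i => (hSps i).1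
  have h1SS : ∀ i, ((1 : Matrix (Fin d) (Fin d) ℂ) - S i * S i).PosSemidef := by
    intro i; rw [(hS i).2]; exact (hE i).2
  have hsub : ∀ i, (S i - S i * S i).PosSemidef := fun i => sub_sq_psd' (hSps i) (h1SS i)
  -- trace of (1 - E i) * ρ is at most ε
  have hrej : ∀ i : Fin m, ((((1 : Matrix (Fin d) (Fin d) ℂ) - E i) * ρ).trace).re ≤ ε := by
    intro i
    rw [Matrix.sub_mul, Matrix.one_mul, Matrix.trace_sub, Complex.sub_re, hρ1]
    have := hacc i
    simp only [Complex.one_re]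
    linarith
  -- the S-rejection trace bound : re tr((1 - S i) ρ) ≤ ε
  have hrejS : ∀ i : Fin m, ((((1 : Matrix (Fin d) (Fin d) ℂ) - S i) * ρ).trace).re ≤ ε := by
    intro i
    have hmono : (((E i) * ρ).trace).re ≤ (((S i) * ρ).trace).re := by
      apply trace_mul_re_mono' hρp
      have := hsub i
      rwa [(hS i).2] at this
    have h1 : (((1 : Matrix (Fin d) (Fin d) ℂ) - S i) * ρ).trace
        = ρ.trace - ((S i) * ρ).trace := by
      rw [Matrix.sub_mul, Matrix.one_mul, Matrix.trace_sub]
    rw [h1, Complex.sub_re, hρ1]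
    have := hacc i
    simp only [Complex.one_re]
    linarith
  -- key estimate (A): ‖vecM ((1 - S i) * T)‖ ≤ s
  have keyF : ∀ i : Fin m, ‖vecM (((1 : Matrix (Fin d) (Fin d) ℂ) - S i) * T)‖ ≤ s := by
    intro i
    have hsq : (‖vecM (((1 : Matrix (Fin d) (Fin d) ℂ) - S i) * T)‖:ℝ)^2 ≤ ε := by
      rw [trace_quad_vecM]
      have hGh : ((1 : Matrix (Fin d) (Fin d) ℂ) - S i)ᴴ = 1 - S i := by
        rw [Matrix.conjTranspose_sub, Matrix.conjTranspose_one, hSherm i]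
      rw [hGh, hTh, hTT]
      refine le_trans ?_ (hrej i)
      apply trace_mul_re_mono' hρp
      have hid : ((1 : Matrix (Fin d) (Fin d) ℂ) - E i)
          - ((1 - S i) * (1 - S i))
          = (S i - S i * S i) + (S i - S i * S i) := by
        rw [← (hS i).2]
        noncomm_ring
      rw [hid]
      exact (hsub i).add (hsub i)
    have := Real.sqrt_le_sqrt hsq
    rwa [Real.sqrt_sq (norm_nonneg _), ← hs] at this
  -- key estimate (B): multiplication by S i is a contraction in Frobenius norm
  have keyC : ∀ (i : Fin m) (Y : Matrix (Fin d) (Fin d) ℂ),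
      ‖vecM (S i * Y)‖ ≤ ‖vecM Y‖ := by
    intro i Y
    have hsq : (‖vecM (S i * Y)‖:ℝ)^2 ≤ (‖vecM Y‖:ℝ)^2 := by
      rw [trace_quad_vecM, norm_vecM_sq, hSherm i, (hS i).2]
      have hpos := trace_mul_re_nonneg' (hE i).2 (Matrix.posSemidef_self_mul_conjTranspose Y)
      rw [Matrix.sub_mul, Matrix.one_mul, Matrix.trace_sub, Complex.sub_re] at hpos
      have : (Yᴴ * Y).trace = (Y * Yᴴ).trace := Matrix.trace_mul_comm _ _
      rw [this]
      linarith
    nlinarith [norm_nonneg (vecM (S i * Y)), norm_nonneg (vecM Y)]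
  -- distance and overlap sequences
  set a : ℕ → ℝ := fun u => ‖vecM (T - X u)‖ with ha
  set c : ℕ → ℝ := fun u => (inner ℂ (vecM T) (vecM (X u)) : ℂ).re with hc
  have ha0 : a 0 = 0 := by simp [ha, hX0, vecM_zero]
  have hnormT : ‖vecM T‖ = 1 := by
    have h1 : (‖vecM T‖:ℝ)^2 = 1 := by
      rw [norm_vecM_sq, hTh, hTT, hρ1]
      simp
    nlinarith [norm_nonneg (vecM T)]
  have hc0 : c 0 = 1 := by
    simp only [hc, hX0]
    rw [inner_vecM, hTh, hTT, hρ1]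
    simp
  -- step bound for the distance sequence
  have hastep : ∀ u, a (u+1) ≤ a u + s := by
    intro u
    by_cases h : u < m
    · have hXu := hXs u h
      have hdec : T - X (u+1)
          = ((1 : Matrix (Fin d) (Fin d) ℂ) - S ⟨u,h⟩) * T + S ⟨u,h⟩ * (T - X u) := by
        rw [hXu, Matrix.sub_mul, Matrix.one_mul, Matrix.mul_sub]
        abel
      calc a (u+1) = ‖vecM (((1 : Matrix (Fin d) (Fin d) ℂ) - S ⟨u,h⟩) * T)
            + vecM (S ⟨u,h⟩ * (T - X u))‖ := by rw [ha]; simp only; rw [hdec, vecM_add]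
        _ ≤ ‖vecM (((1 : Matrix (Fin d) (Fin d) ℂ) - S ⟨u,h⟩) * T)‖
            + ‖vecM (S ⟨u,h⟩ * (T - X u))‖ := norm_add_le _ _
        _ ≤ s + a u := add_le_add (keyF _) (keyC _ _)
        _ = a u + s := by ring
    · rw [show a (u+1) = a u by rw [ha]; simp only; rw [hXn u h]]
      linarith
  have habound : ∀ u, a u ≤ u * s := by
    intro u
    induction u with
    | zero => simp [ha0]
    | succ v ih =>
      have := hastep v
      push_cast
      push_cast at ih
      linarith
  -- step bound for the overlap sequence
  have hcstep : ∀ u, (h : u < m) → c u - c (u+1) ≤ s^2 + s * a u := by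
    intro u h
    set i : Fin m := ⟨u, h⟩ with hi
    have hGh : ((1 : Matrix (Fin d) (Fin d) ℂ) - S i)ᴴ = 1 - S i := by
      rw [Matrix.conjTranspose_sub, Matrix.conjTranspose_one, hSherm i]
    have hXu : X (u+1) = S i * X u := hXs u h
    have hdiff : X u - X (u+1) = ((1 : Matrix (Fin d) (Fin d) ℂ) - S i) * X u := by
      rw [hXu, Matrix.sub_mul, Matrix.one_mul]
    have e1 : c u - c (u+1)
        = (inner ℂ (vecM (((1 : Matrix (Fin d) (Fin d) ℂ) - S i) * T)) (vecM (X u)) : ℂ).re := by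
      rw [hc]
      simp only
      rw [← Complex.sub_re, ← inner_sub_right, ← vecM_sub, hdiff]
      congr 1
      rw [inner_vecM, inner_vecM]
      rw [Matrix.conjTranspose_mul, hGh, hTh]
      simp only [Matrix.mul_assoc]
    have e2 : c u - c (u+1)
        = (inner ℂ (vecM (((1 : Matrix (Fin d) (Fin d) ℂ) - S i) * T)) (vecM T) : ℂ).re
        + (inner ℂ (vecM (((1 : Matrix (Fin d) (Fin d) ℂ) - S i) * T))
            (vecM (X u) - vecM T) : ℂ).re := by
      rw [e1, ← Complex.add_re, ← inner_add_right]
      congr 2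
      abel
    have b1 : (inner ℂ (vecM (((1 : Matrix (Fin d) (Fin d) ℂ) - S i) * T)) (vecM T) : ℂ).re
        ≤ s^2 := by
      rw [inner_vecM]
      have e3 : ((((1 : Matrix (Fin d) (Fin d) ℂ) - S i) * T)ᴴ * T).trace
          = (((1 : Matrix (Fin d) (Fin d) ℂ) - S i) * ρ).trace := by
        rw [Matrix.conjTranspose_mul, hGh, hTh, Matrix.mul_assoc, Matrix.trace_mul_comm,
          Matrix.mul_assoc, hTT]
      rw [e3, hs2]
      exact hrejS i
    have b2 : (inner ℂ (vecM (((1 : Matrix (Fin d) (Fin d) ℂ) - S i) * T))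
        (vecM (X u) - vecM T) : ℂ).re ≤ s * a u := by
      have h1 := re_inner_le_norm (𝕜 := ℂ)
        (vecM (((1 : Matrix (Fin d) (Fin d) ℂ) - S i) * T)) (vecM (X u) - vecM T)
      have h2 : ‖vecM (X u) - vecM T‖ = a u := by
        rw [norm_sub_rev, ← vecM_sub]
      rw [h2] at h1
      refine le_trans h1 ?_
      have h3 : (0:ℝ) ≤ a u := by rw [ha]; exact norm_nonneg _
      exact mul_le_mul_of_nonneg_right (keyF i) h3
    rw [e2]
    linarith
  have hcflat : ∀ u, ¬(u < m) → c (u+1) = c u := by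
    intro u h
    rw [hc]
    simp only
    rw [hXn u h]
  have hcbound : ∀ u : ℕ, 1 - c u ≤ s^2 * ((u:ℝ)*((u:ℝ)+1))/2 := by
    intro u
    induction u with
    | zero => simp [hc0]
    | succ v ih =>
      by_cases h : v < m
      · have h1 := hcstep v h
        have h2 : s * a v ≤ s * ((v:ℝ) * s) :=
          mul_le_mul_of_nonneg_left (habound v) hs0
        push_cast
        push_cast at ih
        nlinarith [sq_nonneg s]
      · rw [hcflat v h]
        push_cast
        push_cast at ih
        nlinarith [sq_nonneg s, mul_nonneg (sq_nonneg s) (Nat.cast_nonneg v : (0:ℝ) ≤ v)]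
  -- norm of the running state is at most one
  have tle : ∀ u : ℕ, ‖vecM (X u)‖ ≤ 1 := by
    intro u
    induction u with
    | zero => rw [hX0, hnormT]
    | succ v ih =>
      by_cases h : v < m
      · rw [hXs v h]
        exact le_trans (keyC _ _) ih
      · rw [hXn v h]
        exact ih
  -- the unnormalized post-measurement state in terms of X
  have hCs : ∀ u : ℕ, u ≤ m → σ u = X u * (X u)ᴴ := by
    intro u
    induction u with
    | zero =>
      intro _
      rw [hσ0, hX0, hTh, hTT]
    | succ v ih =>
      intro h
      have hv : v < m := h
      have h1 := hσ ⟨v, hv⟩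
      simp only at h1
      rw [h1, ih (le_of_lt hv), hXs v hv]
      rw [Matrix.conjTranspose_mul, hSherm ⟨v, hv⟩]
      simp only [Matrix.mul_assoc]
  have htr : ((σ m).trace).re = ‖vecM (X m)‖^2 := by
    rw [hCs m le_rfl, Matrix.trace_mul_comm, ← norm_vecM_sq]
  set t : ℝ := ‖vecM (X m)‖ with htdef
  have ht0 : 0 ≤ t := norm_nonneg _
  have ht1 : t ≤ 1 := tle m
  have hcm : c m ≤ t := by
    have h1 := re_inner_le_norm (𝕜 := ℂ) (vecM T) (vecM (X m))
    rw [hnormT, one_mul] at h1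
    exact h1
  have hBt : 1 - t ≤ s^2 * ((m:ℝ)*((m:ℝ)+1))/2 := by
    have := hcbound m
    linarith
  rw [htr]
  by_cases hms : 1 ≤ (m:ℝ) * s
  · nlinarith [sq_nonneg t]
  · push_neg at hms
    rcases Nat.lt_or_ge m 2 with hm2 | hm2
    · have hm01 : m = 0 ∨ m = 1 := by omega
      rcases hm01 with hm0 | hm1
      · subst hm0
        simp only [Nat.cast_zero] at hBt ⊢
        nlinarith
      · -- m = 1 : direct argument
        subst hm1
        have h1 := hσ ⟨0, Nat.one_pos⟩
        simp only at h1
        have htr1 : (σ 1).trace = (E ⟨0, Nat.one_pos⟩ * ρ).trace := by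
          rw [h1, hσ0, Matrix.trace_mul_cycle, (hS _).2]
        have h2 : 1 - ((σ 1).trace).re ≤ ε := by
          rw [htr1]
          have := hacc ⟨0, Nat.one_pos⟩
          linarith
        have h3 : ((σ 1).trace).re = t^2 := htr
        rw [← h3]
        have hslt1 : s < 1 := by
          simpa using hms
        have : ε ≤ s := by nlinarith
        simpa using h2.trans this
    · have hm2' : (2:ℝ) ≤ (m:ℝ) := by exact_mod_cast hm2
      exact final_ineq' (m:ℝ) s t hm2' hs0 (le_of_lt hms) ht0 ht1 hBt
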